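/- Let A be an N×N primitive nonnegative matrix with Perron–Frobenius eigenvalue λ. Then for every state k ∈ {1,…,N}, the series Σ_{n=1}^{∞} λ^{−n} Σ_{i_1,…,i_{n−1} ≠ k} A(k,i_1)A(i_1,i_2)⋯A(i_{n−1},k) converges and its sum equals 1; here the inner sum ranges over all (n−1)-tuples of states all different from k, the n = 1 term being λ^{−1}A(k,k) and the n = 2 term being λ^{−2} Σ_{i_1 ≠ k} A(k,i_1)A(i_1,k). -/

import Mathlib

/-- `pathSumAvoiding A k n j = ∑_{i₁,…,iₙ ≠ k} A k i₁ * A i₁ i₂ * ⋯ * A iₙ j`,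
the sum over all `n`-tuples of states different from `k` of the products of
the entries of `A` along the path `k, i₁, …, iₙ, j`.  For `n = 0` it is `A k j`. -/
def pathSumAvoiding {N : ℕ} (A : Matrix (Fin N) (Fin N) ℝ) (k : Fin N) :
    ℕ → Fin N → ℝ
  | 0 => fun j => A k j
  | n + 1 => fun j => ∑ i, if i = k then 0 else pathSumAvoiding A k n i * A i j

namespace PFReturnAux

open Finset Filter

variable {N : ℕ} (A : Matrix (Fin N) (Fin N) ℝ) (u : Fin N → ℝ) (lam : ℝ) (k : Fin N)

/-- The time-reversed transition matrix `P j i = u i * A i j / (lam * u j)`. -/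
noncomputable def pfP : Matrix (Fin N) (Fin N) ℝ := Matrix.of fun j i => u i * A i j / (lam * u j)

/-- `P` with the column of `k` killed (paths forbidden to enter `k`). -/
noncomputable def pfQ : Matrix (Fin N) (Fin N) ℝ :=
  Matrix.of fun j i => if i = k then 0 else pfP A u lam j i

/-- probability of avoiding `k` for `n` steps starting from `j`. -/
noncomputable def pfAvoid (n : ℕ) (j : Fin N) : ℝ := ∑ i, (pfQ A u lam k ^ n) j i

/-- probability of first return to `k` at time `n+1`, starting from `j`. -/
noncomputable def pfRet (n : ℕ) (j : Fin N) : ℝ := ∑ i, (pfQ A u lam k ^ n) j i * pfP A u lam i k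

section Basic

variable (hA : ∀ i j, 0 ≤ A i j) (hlam : 0 < lam) (hu : ∀ i, 0 < u i)
  (heig : ∀ j, ∑ i, u i * A i j = lam * u j)

include hA hlam hu in
lemma pfP_nonneg : ∀ j i, 0 ≤ pfP A u lam j i := fun j i =>
  div_nonneg (mul_nonneg (hu i).le (hA i j)) (mul_nonneg hlam.le (hu j).le)

include hA hlam hu in
lemma pfQ_nonneg : ∀ j i, 0 ≤ pfQ A u lam k j i := by
  intro j i
  simp only [pfQ, Matrix.of_apply]
  split
  · exact le_refl 0
  · exact pfP_nonneg A u lam hA hlam hu j i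

include hlam hu heig in
lemma pfP_rowsum (j : Fin N) : ∑ i, pfP A u lam j i = 1 := by
  simp only [pfP, Matrix.of_apply]
  rw [← Finset.sum_div, heig j, div_self]
  exact mul_ne_zero hlam.ne' (hu j).ne'

/-- split a sum over all indices into the `k` term and the rest. -/
lemma sum_split (g : Fin N → ℝ) :
    ∑ i, g i = (∑ i, if i = k then 0 else g i) + g k := by
  have h1 : ∀ i : Fin N, g i = (if i = k then 0 else g i) + (if i = k then g i else 0) := by
    intro i; split <;> simp
  calc ∑ i, g i = ∑ i, ((if i = k then 0 else g i) + (if i = k then g i else 0)) :=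
        Finset.sum_congr rfl fun i _ => h1 i
    _ = (∑ i, if i = k then 0 else g i) + ∑ i, if i = k then g i else 0 :=
        Finset.sum_add_distrib
    _ = (∑ i, if i = k then 0 else g i) + g k := by
        rw [Finset.sum_ite_eq' Finset.univ k g, if_pos (Finset.mem_univ k)]

include hA hlam hu in
lemma Ppow_nonneg : ∀ n j i, 0 ≤ (pfP A u lam ^ n) j i := by
  intro n
  induction n with
  | zero => intro j i; simp [Matrix.one_apply]; split <;> norm_num
  | succ n ih =>
      intro j i
      rw [pow_succ, Matrix.mul_apply]
      exact Finset.sum_nonneg fun l _ =>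
        mul_nonneg (ih j l) (pfP_nonneg A u lam hA hlam hu l i)

include hA hlam hu in
lemma Qpow_nonneg : ∀ n j i, 0 ≤ (pfQ A u lam k ^ n) j i := by
  intro n
  induction n with
  | zero => intro j i; simp [Matrix.one_apply]; split <;> norm_num
  | succ n ih =>
      intro j i
      rw [pow_succ, Matrix.mul_apply]
      exact Finset.sum_nonneg fun l _ =>
        mul_nonneg (ih j l) (pfQ_nonneg A u lam k hA hlam hu l i)

include hA hlam hu in
lemma Qpow_le_Ppow : ∀ n j i, (pfQ A u lam k ^ n) j i ≤ (pfP A u lam ^ n) j i := by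
  intro n
  induction n with
  | zero => intro j i; simp
  | succ n ih =>
      intro j i
      rw [pow_succ, pow_succ, Matrix.mul_apply, Matrix.mul_apply]
      refine Finset.sum_le_sum fun l _ => ?_
      have hQP : pfQ A u lam k l i ≤ pfP A u lam l i := by
        simp only [pfQ, Matrix.of_apply]
        split
        · exact pfP_nonneg A u lam hA hlam hu l i
        · exact le_refl _
      calc (pfQ A u lam k ^ n) j l * pfQ A u lam k l i
          ≤ (pfQ A u lam k ^ n) j l * pfP A u lam l i :=
            mul_le_mul_of_nonneg_left hQP (Qpow_nonneg A u lam k hA hlam hu n j l)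
        _ ≤ (pfP A u lam ^ n) j l * pfP A u lam l i :=
            mul_le_mul_of_nonneg_right (ih j l) (pfP_nonneg A u lam hA hlam hu l i)

include hlam hu heig in
lemma Ppow_rowsum : ∀ n j, ∑ i, (pfP A u lam ^ n) j i = 1 := by
  intro n
  induction n with
  | zero => intro j; simp [Matrix.one_apply]
  | succ n ih =>
      intro j
      have : ∀ i, (pfP A u lam ^ (n+1)) j i = ∑ l, (pfP A u lam ^ n) j l * pfP A u lam l i := by
        intro i; rw [pow_succ, Matrix.mul_apply]
      rw [Finset.sum_congr rfl fun i _ => this i, Finset.sum_comm]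
      calc ∑ l, ∑ i, (pfP A u lam ^ n) j l * pfP A u lam l i
          = ∑ l, (pfP A u lam ^ n) j l * ∑ i, pfP A u lam l i := by
            simp [Finset.mul_sum]
        _ = ∑ l, (pfP A u lam ^ n) j l := by
            refine Finset.sum_congr rfl fun l _ => ?_
            rw [pfP_rowsum A u lam hlam hu heig l, mul_one]
        _ = 1 := ih j

include hlam hu in
/-- The explicit formula for powers of `P`. -/
lemma Ppow_apply : ∀ n j i, (pfP A u lam ^ n) j i = u i * (A ^ n) i j / (lam ^ n * u j) := by
  intro n
  induction n with
  | zero =>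
      intro j i
      simp only [pow_zero, Matrix.one_apply]
      by_cases h : j = i
      · subst h
        simp only [if_pos rfl]
        field_simp
        exact (div_self (hu j).ne').symm
      · rw [if_neg h, if_neg (fun hh => h hh.symm), mul_zero, zero_div]
  | succ n ih =>
      intro j i
      rw [pow_succ, Matrix.mul_apply]
      have hAA : (A ^ (n+1)) i j = ∑ l, A i l * (A ^ n) l j := by
        rw [pow_succ', Matrix.mul_apply]
      rw [hAA]
      rw [Finset.mul_sum, Finset.sum_div]
      refine Finset.sum_congr rfl fun l _ => ?_
      rw [ih j l]
      simp only [pfP, Matrix.of_apply]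
      field_simp [(hu l).ne', (hu j).ne', hlam.ne']
      ring

end Basic

section Renewal

variable (hA : ∀ i j, 0 ≤ A i j) (hlam : 0 < lam) (hu : ∀ i, 0 < u i)
  (heig : ∀ j, ∑ i, u i * A i j = lam * u j)

lemma pfAvoid_zero (j : Fin N) : pfAvoid A u lam k 0 j = 1 := by
  simp [pfAvoid, Matrix.one_apply]

lemma pfAvoid_succ (n : ℕ) (j : Fin N) :
    pfAvoid A u lam k (n + 1) j = ∑ l, pfQ A u lam k j l * pfAvoid A u lam k n l := by
  simp only [pfAvoid, pow_succ', Matrix.mul_apply]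
  rw [Finset.sum_comm]
  simp [Finset.mul_sum]

lemma pfRet_zero (j : Fin N) : pfRet A u lam k 0 j = pfP A u lam j k := by
  simp [pfRet, Matrix.one_apply]

lemma pfRet_succ (n : ℕ) (j : Fin N) :
    pfRet A u lam k (n + 1) j = ∑ l, pfQ A u lam k j l * pfRet A u lam k n l := by
  simp only [pfRet, pow_succ', Matrix.mul_apply, Finset.sum_mul]
  rw [Finset.sum_comm]
  simp [Finset.mul_sum, mul_assoc]

include hlam hu heig in
lemma renewal : ∀ n j, (∑ m ∈ Finset.range n, pfRet A u lam k m j) + pfAvoid A u lam k n j = 1 := by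
  intro n
  induction n with
  | zero => intro j; simp [pfAvoid_zero]
  | succ n ih =>
      intro j
      rw [Finset.sum_range_succ', pfAvoid_succ, pfRet_zero]
      have hstep : ∀ m, pfRet A u lam k (m + 1) j = ∑ l, pfQ A u lam k j l * pfRet A u lam k m l :=
        fun m => pfRet_succ A u lam k m j
      rw [Finset.sum_congr rfl fun m _ => hstep m]
      rw [Finset.sum_comm]
      have hcombine :
          (∑ l, ∑ m ∈ Finset.range n, pfQ A u lam k j l * pfRet A u lam k m l)
            + pfP A u lam j k + ∑ l, pfQ A u lam k j l * pfAvoid A u lam k n l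
          = (∑ l, pfQ A u lam k j l * ((∑ m ∈ Finset.range n, pfRet A u lam k m l)
              + pfAvoid A u lam k n l)) + pfP A u lam j k := by
        simp [Finset.mul_sum, mul_add, Finset.sum_add_distrib]
        ring
      calc (∑ l, ∑ m ∈ Finset.range n, pfQ A u lam k j l * pfRet A u lam k m l)
            + pfP A u lam j k + ∑ l, pfQ A u lam k j l * pfAvoid A u lam k n l
          = (∑ l, pfQ A u lam k j l * ((∑ m ∈ Finset.range n, pfRet A u lam k m l)
              + pfAvoid A u lam k n l)) + pfP A u lam j k := hcombine
        _ = (∑ l, pfQ A u lam k j l) + pfP A u lam j k := by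
            refine congrArg (· + pfP A u lam j k) (Finset.sum_congr rfl fun l _ => ?_)
            rw [ih l, mul_one]
        _ = 1 := by
            have := sum_split k (fun i => pfP A u lam j i)
            simp only [pfQ, Matrix.of_apply]
            rw [← this, pfP_rowsum A u lam hlam hu heig j]

include hA hlam hu in
lemma ret_eq_pathSum : ∀ n j, u j * pfRet A u lam k n j
    = lam⁻¹ ^ (n + 1) * u k * pathSumAvoiding A k n j := by
  intro n
  induction n with
  | zero =>
      intro j
      rw [pfRet_zero]
      simp only [pfP, Matrix.of_apply, pathSumAvoiding, pow_one]
      field_simp [(hu j).ne', hlam.ne']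
      simp [hlam.ne']
  | succ n ih =>
      intro j
      rw [pfRet_succ, Finset.mul_sum]
      have hterm : ∀ l, u j * (pfQ A u lam k j l * pfRet A u lam k n l)
          = lam⁻¹ ^ (n + 1 + 1) * u k *
              (if l = k then 0 else pathSumAvoiding A k n l * A l j) := by
        intro l
        simp only [pfQ, Matrix.of_apply]
        by_cases hl : l = k
        · simp [hl]
        · rw [if_neg hl, if_neg hl]
          have huj := (hu j).ne'
          have hul := (hu l).ne'
          calc u j * (pfP A u lam j l * pfRet A u lam k n l)
              = (A l j / lam) * (u l * pfRet A u lam k n l) := by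
                simp only [pfP, Matrix.of_apply]
                field_simp
            _ = (A l j / lam) * (lam⁻¹ ^ (n + 1) * u k * pathSumAvoiding A k n l) := by
                rw [ih l]
            _ = lam⁻¹ ^ (n + 1 + 1) * u k * (pathSumAvoiding A k n l * A l j) := by
                rw [pow_succ]
                field_simp
                have h2 : lam ^ 2 * lam⁻¹ ^ 2 = 1 := by rw [← mul_pow, mul_inv_cancel₀ hlam.ne', one_pow]
                linear_combination (-(A l j * lam⁻¹ ^ n * u k * pathSumAvoiding A k n l)) * h2
      rw [Finset.sum_congr rfl fun l _ => hterm l]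
      rw [← Finset.mul_sum]
      rfl

include hA hlam hu heig in
lemma pfAvoid_nonneg (n : ℕ) (j : Fin N) : 0 ≤ pfAvoid A u lam k n j :=
  Finset.sum_nonneg fun i _ => Qpow_nonneg A u lam k hA hlam hu n j i

include hA hlam hu heig in
lemma pfAvoid_le_one (n : ℕ) (j : Fin N) : pfAvoid A u lam k n j ≤ 1 := by
  calc pfAvoid A u lam k n j ≤ ∑ i, (pfP A u lam ^ n) j i :=
        Finset.sum_le_sum fun i _ => Qpow_le_Ppow A u lam k hA hlam hu n j i
    _ = 1 := Ppow_rowsum A u lam hlam hu heig n j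

include hA hlam hu heig in
lemma pfAvoid_add_le (a b : ℕ) (j : Fin N) (C : ℝ) (hC : 0 ≤ C)
    (hCb : ∀ l, pfAvoid A u lam k b l ≤ C) :
    pfAvoid A u lam k (a + b) j ≤ pfAvoid A u lam k a j * C := by
  have hrw : pfAvoid A u lam k (a + b) j
      = ∑ l, (pfQ A u lam k ^ a) j l * pfAvoid A u lam k b l := by
    simp only [pfAvoid, pow_add, Matrix.mul_apply]
    rw [Finset.sum_comm]
    simp [Finset.mul_sum]
  rw [hrw, pfAvoid, Finset.sum_mul]
  refine Finset.sum_le_sum fun l _ => ?_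
  exact mul_le_mul_of_nonneg_left (hCb l) (Qpow_nonneg A u lam k hA hlam hu a j l)

include hA hlam hu in
lemma Qpow_apply_k (n : ℕ) (hn : 0 < n) (j : Fin N) : (pfQ A u lam k ^ n) j k = 0 := by
  obtain ⟨m, rfl⟩ := Nat.exists_eq_succ_of_ne_zero hn.ne'
  rw [pow_succ, Matrix.mul_apply]
  refine Finset.sum_eq_zero fun l _ => ?_
  simp [pfQ]

end Renewal

end PFReturnAux

open PFReturnAux Finset Filter in
/-- **Lemma.**  If `A` is a primitive nonnegative matrix with Perron–Frobenius
eigenvalue `lam`, then for every state `k` the series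
`∑_{n≥1} lam⁻ⁿ ∑_{i₁,…,i_{n−1} ≠ k} A(k,i₁)A(i₁,i₂)⋯A(i_{n−1},k)`
converges to `1`.  (In the formalization the index is shifted: the term of
index `n : ℕ` is `lam⁻⁽ⁿ⁺¹⁾ ∑_{i₁,…,iₙ ≠ k} A(k,i₁)⋯A(iₙ,k)`, so the term
`n = 0` is `lam⁻¹ A(k,k)`.) -/
theorem perron_frobenius_return_series_eq_one
    {N : ℕ} (A : Matrix (Fin N) (Fin N) ℝ)
    (hA_nonneg : ∀ i j, 0 ≤ A i j)
    (hA_prim : ∃ m : ℕ, 0 < m ∧ ∀ i j, 0 < (A ^ m) i j)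
    (lam : ℝ) (u : Fin N → ℝ)
    (hlam_pos : 0 < lam)
    (hu_pos : ∀ i, 0 < u i)
    (hu_sum : ∑ i, u i = 1)
    (hu_eig : ∀ j, ∑ i, u i * A i j = lam * u j)
    (k : Fin N) :
    HasSum (fun n : ℕ => lam⁻¹ ^ (n + 1) * pathSumAvoiding A k n k) 1 := by
  obtain ⟨m, hm_pos, hm⟩ := hA_prim
  -- the terms of the series are the first-return probabilities `pfRet n k`
  have hterm : ∀ n, lam⁻¹ ^ (n + 1) * pathSumAvoiding A k n k = pfRet A u lam k n k := by
    intro n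
    have h := ret_eq_pathSum A u lam k hA_nonneg hlam_pos hu_pos n k
    have huk := (hu_pos k).ne'
    have h2 : u k * (lam⁻¹ ^ (n + 1) * pathSumAvoiding A k n k) = u k * pfRet A u lam k n k := by
      rw [h]; ring
    exact mul_left_cancel₀ huk h2
  -- partial sums are `1 - pfAvoid n k`
  have hpartial : ∀ n, ∑ i ∈ Finset.range n, lam⁻¹ ^ (i + 1) * pathSumAvoiding A k i k
      = 1 - pfAvoid A u lam k n k := by
    intro n
    have h := renewal A u lam k hlam_pos hu_pos hu_eig n k
    rw [Finset.sum_congr rfl fun i _ => hterm i]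
    linarith
  -- δ : uniform lower bound on the probability of being at `k` after `m` steps
  set P := pfP A u lam with hP
  have hNe : (Finset.univ : Finset (Fin N)).Nonempty := ⟨k, Finset.mem_univ k⟩
  set δ : ℝ := Finset.univ.inf' hNe (fun j => (P ^ m) j k) with hδ
  have hδ_pos : 0 < δ := by
    rw [hδ, Finset.lt_inf'_iff]
    intro j _
    rw [hP, Ppow_apply A u lam hlam_pos hu_pos m j k]
    exact div_pos (mul_pos (hu_pos k) (hm k j)) (mul_pos (pow_pos hlam_pos m) (hu_pos j))
  have hδ_le : ∀ j, δ ≤ (P ^ m) j k := fun j => Finset.inf'_le _ (Finset.mem_univ j)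
  -- probability of avoiding `k` for `m` steps is at most `1 - δ`
  have hcontract : ∀ j, pfAvoid A u lam k m j ≤ 1 - δ := by
    intro j
    have h1 : pfAvoid A u lam k m j ≤ ∑ i, if i = k then 0 else (P ^ m) j i := by
      refine Finset.sum_le_sum fun i _ => ?_
      by_cases hik : i = k
      · rw [if_pos hik, hik]
        exact le_of_eq (Qpow_apply_k A u lam k hA_nonneg hlam_pos hu_pos m hm_pos j)
      · rw [if_neg hik]
        exact Qpow_le_Ppow A u lam k hA_nonneg hlam_pos hu_pos m j i
    have h2 : (∑ i, if i = k then 0 else (P ^ m) j i) = 1 - (P ^ m) j k := by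
      have := sum_split k (fun i => (P ^ m) j i)
      rw [hP] at this ⊢
      rw [Ppow_rowsum A u lam hlam_pos hu_pos hu_eig m j] at this
      linarith
    have h3 := hδ_le j
    linarith
  have hδ_le_one : δ ≤ 1 := by
    have := hcontract k
    have := pfAvoid_nonneg A u lam k hA_nonneg hlam_pos hu_pos hu_eig m k
    linarith
  -- avoidance probability decays geometrically: `pfAvoid (m*q) j ≤ (1-δ)^q`
  have hgeom : ∀ q j, pfAvoid A u lam k (m * q) j ≤ (1 - δ) ^ q := by
    intro q
    induction q with
    | zero => intro j; simp [pfAvoid_zero]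
    | succ q ih =>
        intro j
        have heq : m * (q + 1) = m + m * q := by ring
        rw [heq]
        calc pfAvoid A u lam k (m + m * q) j
            ≤ pfAvoid A u lam k m j * (1 - δ) ^ q := by
              refine pfAvoid_add_le A u lam k hA_nonneg hlam_pos hu_pos hu_eig m (m * q) j
                ((1 - δ) ^ q) (pow_nonneg (by linarith) q) ih
          _ ≤ (1 - δ) * (1 - δ) ^ q := by
              exact mul_le_mul_of_nonneg_right (hcontract j) (pow_nonneg (by linarith) q)
          _ = (1 - δ) ^ (q + 1) := by rw [pow_succ]; ring
  -- hence `pfAvoid n k ≤ (1-δ)^(n/m)`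
  have hbound : ∀ n, pfAvoid A u lam k n k ≤ (1 - δ) ^ (n / m) := by
    intro n
    have hsplit : n = m * (n / m) + n % m := (Nat.div_add_mod' n m ▸ (Nat.div_add_mod n m).symm)
    calc pfAvoid A u lam k n k = pfAvoid A u lam k (m * (n / m) + n % m) k := by rw [← hsplit]
      _ ≤ pfAvoid A u lam k (m * (n / m)) k * 1 := by
          refine pfAvoid_add_le A u lam k hA_nonneg hlam_pos hu_pos hu_eig _ _ k 1
            zero_le_one (fun l => pfAvoid_le_one A u lam k hA_nonneg hlam_pos hu_pos hu_eig _ l)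
      _ = pfAvoid A u lam k (m * (n / m)) k := mul_one _
      _ ≤ (1 - δ) ^ (n / m) := hgeom (n / m) k
  -- avoidance probability tends to 0
  have hdiv_tendsto : Tendsto (fun n : ℕ => n / m) atTop atTop := by
    apply tendsto_atTop_atTop.2
    intro b
    exact ⟨m * b, fun n hn => Nat.le_div_iff_mul_le hm_pos |>.2 (by linarith [hn])⟩
  have hpow_tendsto : Tendsto (fun n : ℕ => (1 - δ) ^ (n / m)) atTop (nhds 0) :=
    (tendsto_pow_atTop_nhds_zero_of_lt_one (by linarith) (by linarith)).comp hdiv_tendsto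
  have havoid_tendsto : Tendsto (fun n => pfAvoid A u lam k n k) atTop (nhds 0) :=
    squeeze_zero (fun n => pfAvoid_nonneg A u lam k hA_nonneg hlam_pos hu_pos hu_eig n k)
      hbound hpow_tendsto
  -- partial sums tend to 1
  have hsum_tendsto :
      Tendsto (fun n => ∑ i ∈ Finset.range n, lam⁻¹ ^ (i + 1) * pathSumAvoiding A k i k)
        atTop (nhds 1) := by
    have : Tendsto (fun n => 1 - pfAvoid A u lam k n k) atTop (nhds (1 - 0)) :=
      tendsto_const_nhds.sub havoid_tendsto
    rw [sub_zero] at this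
    exact this.congr fun n => (hpartial n).symm
  -- conclude
  have hnonneg : ∀ n, 0 ≤ lam⁻¹ ^ (n + 1) * pathSumAvoiding A k n k := by
    intro n
    rw [hterm n]
    exact Finset.sum_nonneg fun i _ =>
      mul_nonneg (Qpow_nonneg A u lam k hA_nonneg hlam_pos hu_pos n k i)
        (pfP_nonneg A u lam hA_nonneg hlam_pos hu_pos i k)
  have hle : ∀ n, ∑ i ∈ Finset.range n, lam⁻¹ ^ (i + 1) * pathSumAvoiding A k i k ≤ 1 := by
    intro n
    rw [hpartial n]
    have := pfAvoid_nonneg A u lam k hA_nonneg hlam_pos hu_pos hu_eig n k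
    linarith
  have hsummable : Summable (fun n : ℕ => lam⁻¹ ^ (n + 1) * pathSumAvoiding A k n k) :=
    summable_of_sum_range_le hnonneg hle
  have := hsummable.hasSum
  rwa [tendsto_nhds_unique this.tendsto_sum_nat hsum_tendsto] at this
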